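/- Suppose S ⊆ {v_1, …, v_n} is a solution of the instance. Let T be the tree with node set {A, B, Q_1, …, Q_n} and edge set {AB} ∪ {AQ_i : v_i ∈ S} ∪ {BQ_i : v_i ∉ S}. Then T is a clique tree of G_I; in the tree model defined by T, the subtrees T_{v_i}, T_{z_1}, T_{z_2} each have 0 leaves and each subtree T_{y_j} has exactly k leaves. Consequently, the vertex leafage of G_I is at most k. -/

import Mathlib

open SimpleGraph

/-- The degree of a vertex in a graph, via `Set.ncard`. -/
noncomputable def deg {W : Type*} (T : SimpleGraph W) (w : W) : ℕ :=
  (T.neighborSet w).ncard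

/-- The set of leaves (degree-one vertices) of a graph. -/
def leaves {W : Type*} (T : SimpleGraph W) : Set W :=
  {w | deg T w = 1}

/-- The number of leaves. -/
noncomputable def numLeaves {W : Type*} (T : SimpleGraph W) : ℕ :=
  (leaves T).ncard

/-- The set of leaves of the subgraph of `T` induced by `s`
(nodes of `s` with exactly one neighbour inside `s`). -/
def subLeaves {W : Type*} (T : SimpleGraph W) (s : Set W) : Set W :=
  {w | w ∈ s ∧ (T.neighborSet w ∩ s).ncard = 1}

/-- The number of leaves of the subtree induced by `s`. -/
noncomputable def numSubLeaves {W : Type*} (T : SimpleGraph W) (s : Set W) : ℕ :=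
  (subLeaves T s).ncard

/-- A tree model of a graph `G`: a finite host tree `T` together with nonempty
subtrees `sub u` such that distinct vertices are adjacent in `G` iff their
subtrees intersect. -/
structure TreeModel {V : Type*} (G : SimpleGraph V) where
  W : Type
  finW : Finite W
  T : SimpleGraph W
  tree : T.IsTree
  sub : V → Set W
  sub_nonempty : ∀ u, (sub u).Nonempty
  sub_conn : ∀ u, (T.induce (sub u)).Connected
  adj_iff : ∀ u v, u ≠ v → (G.Adj u v ↔ (sub u ∩ sub v).Nonempty)

/-- The leafage of a chordal graph: the minimum number of host-tree leaves over
all tree models. -/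
noncomputable def leafage {V : Type*} (G : SimpleGraph V) : ℕ :=
  sInf {n | ∃ M : TreeModel G, numLeaves M.T = n}

/-- The vertex leafage of a chordal graph: the least `k` such that `G` has a tree
model all of whose subtrees have at most `k` leaves. -/
noncomputable def vleafage {V : Type*} (G : SimpleGraph V) : ℕ :=
  sInf {k | ∃ M : TreeModel G, ∀ u, numSubLeaves M.T (M.sub u) ≤ k}

/-- A maximal clique of `G`. -/
def IsMaxClique {V : Type*} (G : SimpleGraph V) (C : Set V) : Prop :=
  G.IsClique C ∧ ∀ D, G.IsClique D → C ⊆ D → D = C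

/-- The type of maximal cliques of `G`. -/
abbrev MaxCliques {V : Type*} (G : SimpleGraph V) := {C : Set V // IsMaxClique G C}

/-- A clique tree of `G`: a tree whose nodes are exactly the maximal cliques of `G`,
such that every node on the path between nodes `C` and `C'` contains `C ∩ C'`. -/
structure CliqueTree {V : Type*} (G : SimpleGraph V) where
  T : SimpleGraph (MaxCliques G)
  tree : T.IsTree
  path_cond : ∀ (C C' : MaxCliques G) (p : T.Walk C C'), p.IsPath →
    ∀ C'' ∈ p.support, C.1 ∩ C'.1 ⊆ C''.1

/-- The subtree (node set) assigned to a vertex `u` in the tree model defined by a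
clique tree of `G`: the set of maximal cliques containing `u`. -/
def cliqueSub {V : Type*} (G : SimpleGraph V) (u : V) : Set (MaxCliques G) :=
  {C | u ∈ C.1}

/-- The set of nodes of degree at least 3. -/
def Hh {W : Type*} (T : SimpleGraph W) : Set W := {w | 3 ≤ deg T w}

/-- The set of edges incident to a node of degree at least 3. -/
def Ee {W : Type*} (T : SimpleGraph W) : Set (Sym2 W) :=
  {e | e ∈ T.edgeSet ∧ ∃ w ∈ e, w ∈ Hh T}

/-- The vertex set of the graph `G_I`: variable vertices `v i`, clause vertices `y j`,
and two extra vertices `z 0`, `z 1`. -/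
inductive GV (n m : ℕ) where
  | v : Fin n → GV n m
  | y : Fin m → GV n m
  | z : Fin 2 → GV n m
deriving DecidableEq

instance (n m : ℕ) : Finite (GV n m) :=
  Finite.of_surjective
    (fun x : (Fin n ⊕ Fin m ⊕ Fin 2) => match x with
      | Sum.inl i => GV.v i
      | Sum.inr (Sum.inl j) => GV.y j
      | Sum.inr (Sum.inr t) => GV.z t)
    (by
      intro g
      cases g with
      | v i => exact ⟨Sum.inl i, rfl⟩
      | y j => exact ⟨Sum.inr (Sum.inl j), rfl⟩
      | z t => exact ⟨Sum.inr (Sum.inr t), rfl⟩)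

/-- The split graph `G_I` of the reduction: `{y j}` is a clique, `{v i} ∪ {z t}` is an
independent set, `v i` is adjacent to `y j` iff `i ∈ C j`, and each `z t` is adjacent to
every `y j`. -/
def GI (n m : ℕ) (C : Fin m → Finset (Fin n)) : SimpleGraph (GV n m) :=
  SimpleGraph.fromRel (fun a b =>
    match a, b with
    | GV.y _, GV.y _ => True
    | GV.v i, GV.y j => i ∈ C j
    | GV.z _, GV.y _ => True
    | _, _ => False)

/-- The maximal clique `A = {z_1, y_1, …, y_m}`. -/
def setA (n m : ℕ) : Set (GV n m) := {GV.z 0} ∪ {x | ∃ j, x = GV.y j}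

/-- The maximal clique `B = {z_2, y_1, …, y_m}`. -/
def setB (n m : ℕ) : Set (GV n m) := {GV.z 1} ∪ {x | ∃ j, x = GV.y j}

/-- The maximal clique `Q_i = {v_i} ∪ {y_j : v_i ∈ C_j}`. -/
def setQ (n m : ℕ) (C : Fin m → Finset (Fin n)) (i : Fin n) : Set (GV n m) :=
  {GV.v i} ∪ {x | ∃ j, x = GV.y j ∧ i ∈ C j}

/-- The tree on the maximal cliques of `G_I` determined by a solution `S`:
its edges are `AB`, the edges `AQ_i` for `v_i ∈ S`, and the edges `BQ_i` for
`v_i ∉ S`. -/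
def TS (n m : ℕ) (C : Fin m → Finset (Fin n)) (S : Set (Fin n)) :
    SimpleGraph (MaxCliques (GI n m C)) :=
  SimpleGraph.fromRel (fun D D' =>
    (D.1 = setA n m ∧ D'.1 = setB n m) ∨
    (∃ i ∈ S, D.1 = setA n m ∧ D'.1 = setQ n m C i) ∨
    (∃ i ∉ S, D.1 = setB n m ∧ D'.1 = setQ n m C i))

section Aux
variable {n m : ℕ} {C : Fin m → Finset (Fin n)}

lemma GI_adj (a b : GV n m) : (GI n m C).Adj a b ↔ a ≠ b ∧
    ((match a, b with
    | GV.y _, GV.y _ => True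
    | GV.v i, GV.y j => i ∈ C j
    | GV.z _, GV.y _ => True
    | _, _ => False) ∨
    (match b, a with
    | GV.y _, GV.y _ => True
    | GV.v i, GV.y j => i ∈ C j
    | GV.z _, GV.y _ => True
    | _, _ => False)) := SimpleGraph.fromRel_adj _ a b

lemma mem_setA {x : GV n m} : x ∈ setA n m ↔ x = GV.z 0 ∨ ∃ j, x = GV.y j := by
  simp [setA]

lemma mem_setB {x : GV n m} : x ∈ setB n m ↔ x = GV.z 1 ∨ ∃ j, x = GV.y j := by
  simp [setB]

lemma mem_setQ {x : GV n m} {i : Fin n} :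
    x ∈ setQ n m C i ↔ x = GV.v i ∨ ∃ j, x = GV.y j ∧ i ∈ C j := by
  simp [setQ]

lemma clique_setA : (GI n m C).IsClique (setA n m) := by
  intro a ha b hb hab
  rw [GI_adj]
  refine ⟨hab, ?_⟩
  rw [mem_setA] at ha hb
  rcases ha with rfl | ⟨j, rfl⟩ <;> rcases hb with rfl | ⟨j', rfl⟩
  · exact absurd rfl hab
  · exact Or.inl trivial
  · exact Or.inr trivial
  · exact Or.inl trivial

lemma clique_setB : (GI n m C).IsClique (setB n m) := by
  intro a ha b hb hab
  rw [GI_adj]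
  refine ⟨hab, ?_⟩
  rw [mem_setB] at ha hb
  rcases ha with rfl | ⟨j, rfl⟩ <;> rcases hb with rfl | ⟨j', rfl⟩
  · exact absurd rfl hab
  · exact Or.inl trivial
  · exact Or.inr trivial
  · exact Or.inl trivial

lemma clique_setQ (i : Fin n) : (GI n m C).IsClique (setQ n m C i) := by
  intro a ha b hb hab
  rw [GI_adj]
  refine ⟨hab, ?_⟩
  rw [mem_setQ] at ha hb
  rcases ha with rfl | ⟨j, rfl, hj⟩ <;> rcases hb with rfl | ⟨j', rfl, hj'⟩
  · exact absurd rfl hab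
  · exact Or.inl hj'
  · exact Or.inr hj
  · exact Or.inl trivial

lemma max_setA : IsMaxClique (GI n m C) (setA n m) := by
  refine ⟨clique_setA, fun D hD hsub => ?_⟩
  apply Set.Subset.antisymm _ hsub
  intro d hd
  rw [mem_setA]
  have hz : GV.z 0 ∈ D := hsub (by rw [mem_setA]; exact Or.inl rfl)
  cases d with
  | v i =>
      have := hD hd hz (by simp)
      rw [GI_adj] at this
      exact absurd this.2 (by simp)
  | y j => exact Or.inr ⟨j, rfl⟩
  | z t =>
      left
      by_contra hne
      have := hD hd hz hne
      rw [GI_adj] at this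
      exact absurd this.2 (by simp)

lemma max_setB : IsMaxClique (GI n m C) (setB n m) := by
  refine ⟨clique_setB, fun D hD hsub => ?_⟩
  apply Set.Subset.antisymm _ hsub
  intro d hd
  rw [mem_setB]
  have hz : GV.z 1 ∈ D := hsub (by rw [mem_setB]; exact Or.inl rfl)
  cases d with
  | v i =>
      have := hD hd hz (by simp)
      rw [GI_adj] at this
      exact absurd this.2 (by simp)
  | y j => exact Or.inr ⟨j, rfl⟩
  | z t =>
      left
      by_contra hne
      have := hD hd hz hne
      rw [GI_adj] at this
      exact absurd this.2 (by simp)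

lemma max_setQ (i : Fin n) : IsMaxClique (GI n m C) (setQ n m C i) := by
  refine ⟨clique_setQ i, fun D hD hsub => ?_⟩
  apply Set.Subset.antisymm _ hsub
  intro d hd
  rw [mem_setQ]
  have hv : GV.v i ∈ D := hsub (by rw [mem_setQ]; exact Or.inl rfl)
  cases d with
  | v i' =>
      left
      by_contra hne
      have := hD hd hv (by simpa using fun h => hne (by rw [h]))
      rw [GI_adj] at this
      exact absurd this.2 (by simp)
  | y j =>
      have := hD hd hv (by simp)
      rw [GI_adj] at this
      rcases this.2 with h | h
      · exact absurd h (by simp)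
      · exact Or.inr ⟨j, rfl, h⟩
  | z t =>
      have := hD hd hv (by simp)
      rw [GI_adj] at this
      exact absurd this.2 (by simp)

lemma maxclique_cases {D : Set (GV n m)} (hD : IsMaxClique (GI n m C) D) :
    D = setA n m ∨ D = setB n m ∨ ∃ i, D = setQ n m C i := by
  by_cases hz0 : GV.z 0 ∈ D
  · left
    rw [← hD.2 (setA n m) clique_setA ?_]
    intro d hd
    rw [mem_setA]
    cases d with
    | v i =>
        have := hD.1 hd hz0 (by simp)
        rw [GI_adj] at this
        exact absurd this.2 (by simp)
    | y j => exact Or.inr ⟨j, rfl⟩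
    | z t =>
        left
        by_contra hne
        have := hD.1 hd hz0 hne
        rw [GI_adj] at this
        exact absurd this.2 (by simp)
  · by_cases hz1 : GV.z 1 ∈ D
    · right; left
      rw [← hD.2 (setB n m) clique_setB ?_]
      intro d hd
      rw [mem_setB]
      cases d with
      | v i =>
          have := hD.1 hd hz1 (by simp)
          rw [GI_adj] at this
          exact absurd this.2 (by simp)
      | y j => exact Or.inr ⟨j, rfl⟩
      | z t =>
          left
          by_contra hne
          have := hD.1 hd hz1 hne
          rw [GI_adj] at this
          exact absurd this.2 (by simp)
    · by_cases hv : ∃ i, GV.v i ∈ D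
      · obtain ⟨i, hi⟩ := hv
        right; right
        exact ⟨i, by
          rw [← hD.2 (setQ n m C i) (clique_setQ i) ?_]
          intro d hd
          rw [mem_setQ]
          cases d with
          | v i' =>
              left
              by_contra hne
              have := hD.1 hd hi (by simpa using fun h => hne (by rw [h]))
              rw [GI_adj] at this
              exact absurd this.2 (by simp)
          | y j =>
              have := hD.1 hd hi (by simp)
              rw [GI_adj] at this
              rcases this.2 with h | h
              · exact absurd h (by simp)
              · exact Or.inr ⟨j, rfl, h⟩
          | z t =>
              have := hD.1 hd hi (by simp)
              rw [GI_adj] at this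
              exact absurd this.2 (by simp)⟩
      · left
        rw [← hD.2 (setA n m) clique_setA ?_]
        intro d hd
        rw [mem_setA]
        cases d with
        | v i => exact absurd ⟨i, hd⟩ hv
        | y j => exact Or.inr ⟨j, rfl⟩
        | z t =>
            exfalso
            have : t = 0 ∨ t = 1 := by omega
            rcases this with rfl | rfl
            · exact hz0 hd
            · exact hz1 hd

lemma setA_ne_setB : setA n m ≠ setB n m := by
  intro h
  have : GV.z 0 ∈ setB n m := h ▸ (by rw [mem_setA]; exact Or.inl rfl)
  rw [mem_setB] at this
  rcases this with h' | ⟨j, h'⟩ <;> simp [Fin.ext_iff] at h'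

lemma setA_ne_setQ (i : Fin n) : setA n m ≠ setQ n m C i := by
  intro h
  have : GV.v i ∈ setA n m := h ▸ (by rw [mem_setQ]; exact Or.inl rfl)
  rw [mem_setA] at this
  rcases this with h' | ⟨j, h'⟩ <;> simp at h'

lemma setB_ne_setQ (i : Fin n) : setB n m ≠ setQ n m C i := by
  intro h
  have : GV.v i ∈ setB n m := h ▸ (by rw [mem_setQ]; exact Or.inl rfl)
  rw [mem_setB] at this
  rcases this with h' | ⟨j, h'⟩ <;> simp at h'

lemma setQ_inj {i i' : Fin n} (h : setQ n m C i = setQ n m C i') : i = i' := by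
  have : GV.v i ∈ setQ n m C i' := h ▸ (by rw [mem_setQ]; exact Or.inl rfl)
  rw [mem_setQ] at this
  rcases this with h' | ⟨j, h', _⟩
  · exact congrArg (fun x => match x with | GV.v a => a | _ => i) h'
  · simp at h'

end Aux


section Aux2
variable {n m : ℕ} {C : Fin m → Finset (Fin n)} {S : Set (Fin n)}

/-- The node `A` of the clique tree. -/
def nA (n m : ℕ) (C : Fin m → Finset (Fin n)) : MaxCliques (GI n m C) := ⟨setA n m, max_setA⟩

/-- The node `B` of the clique tree. -/
def nB (n m : ℕ) (C : Fin m → Finset (Fin n)) : MaxCliques (GI n m C) := ⟨setB n m, max_setB⟩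

/-- The node `Q i` of the clique tree. -/
def nQ (n m : ℕ) (C : Fin m → Finset (Fin n)) (i : Fin n) : MaxCliques (GI n m C) :=
  ⟨setQ n m C i, max_setQ i⟩

lemma nA_ne_nB : nA n m C ≠ nB n m C := fun h => setA_ne_setB (congrArg Subtype.val h)
lemma nA_ne_nQ (i : Fin n) : nA n m C ≠ nQ n m C i :=
  fun h => setA_ne_setQ i (congrArg Subtype.val h)
lemma nB_ne_nQ (i : Fin n) : nB n m C ≠ nQ n m C i :=
  fun h => setB_ne_setQ i (congrArg Subtype.val h)
lemma nQ_inj {i i' : Fin n} (h : nQ n m C i = nQ n m C i') : i = i' :=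
  setQ_inj (congrArg Subtype.val h)

lemma node_cases (D : MaxCliques (GI n m C)) :
    D = nA n m C ∨ D = nB n m C ∨ ∃ i, D = nQ n m C i := by
  rcases maxclique_cases D.2 with h | h | ⟨i, h⟩
  · exact Or.inl (Subtype.ext h)
  · exact Or.inr (Or.inl (Subtype.ext h))
  · exact Or.inr (Or.inr ⟨i, Subtype.ext h⟩)

lemma TS_adj {D D' : MaxCliques (GI n m C)} : (TS n m C S).Adj D D' ↔ D ≠ D' ∧
    (((D.1 = setA n m ∧ D'.1 = setB n m) ∨
      (∃ i ∈ S, D.1 = setA n m ∧ D'.1 = setQ n m C i) ∨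
      (∃ i ∉ S, D.1 = setB n m ∧ D'.1 = setQ n m C i)) ∨
     ((D'.1 = setA n m ∧ D.1 = setB n m) ∨
      (∃ i ∈ S, D'.1 = setA n m ∧ D.1 = setQ n m C i) ∨
      (∃ i ∉ S, D'.1 = setB n m ∧ D.1 = setQ n m C i))) :=
  SimpleGraph.fromRel_adj _ D D'

lemma adj_AB : (TS n m C S).Adj (nA n m C) (nB n m C) :=
  TS_adj.mpr ⟨nA_ne_nB, Or.inl (Or.inl ⟨rfl, rfl⟩)⟩

lemma adj_AQ {i : Fin n} (h : i ∈ S) : (TS n m C S).Adj (nA n m C) (nQ n m C i) :=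
  TS_adj.mpr ⟨nA_ne_nQ i, Or.inl (Or.inr (Or.inl ⟨i, h, rfl, rfl⟩))⟩

lemma adj_BQ {i : Fin n} (h : i ∉ S) : (TS n m C S).Adj (nB n m C) (nQ n m C i) :=
  TS_adj.mpr ⟨nB_ne_nQ i, Or.inl (Or.inr (Or.inr ⟨i, h, rfl, rfl⟩))⟩

lemma adj_nQ {i : Fin n} {D : MaxCliques (GI n m C)} (h : (TS n m C S).Adj (nQ n m C i) D) :
    (i ∈ S ∧ D = nA n m C) ∨ (i ∉ S ∧ D = nB n m C) := by
  rw [TS_adj] at h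
  obtain ⟨hne, h⟩ := h
  rcases h with (⟨h1, _⟩ | ⟨i', _, h1, _⟩ | ⟨i', _, h1, _⟩) |
    (⟨h1, h2⟩ | ⟨i', hi', h1, h2⟩ | ⟨i', hi', h1, h2⟩)
  · exact absurd h1.symm (setA_ne_setQ i)
  · exact absurd h1.symm (setA_ne_setQ i)
  · exact absurd h1.symm (setB_ne_setQ i)
  · exact absurd h2.symm (setB_ne_setQ i)
  · exact Or.inl ⟨setQ_inj h2 ▸ hi', Subtype.ext h1⟩
  · exact Or.inr ⟨setQ_inj h2 ▸ hi', Subtype.ext h1⟩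

lemma nQ_nbr_unique {i : Fin n} {D D' : MaxCliques (GI n m C)}
    (h : (TS n m C S).Adj (nQ n m C i) D) (h' : (TS n m C S).Adj (nQ n m C i) D') : D = D' := by
  rcases adj_nQ h with ⟨hi, rfl⟩ | ⟨hi, rfl⟩ <;> rcases adj_nQ h' with ⟨hi', rfl⟩ | ⟨hi', rfl⟩
  · rfl
  · exact absurd hi hi'
  · exact absurd hi' hi
  · rfl

lemma nQ_not_internal {D D' : MaxCliques (GI n m C)} {i : Fin n}
    (p : (TS n m C S).Walk D D') (hp : p.IsPath) (hmem : nQ n m C i ∈ p.support) :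
    nQ n m C i = D ∨ nQ n m C i = D' := by
  by_contra hcon
  push_neg at hcon
  obtain ⟨hne1, hne2⟩ := hcon
  obtain ⟨q, r, rfl⟩ := SimpleGraph.Walk.mem_support_iff_exists_append.mp hmem
  have hqn : ¬ q.reverse.Nil := SimpleGraph.Walk.not_nil_of_ne hne1
  obtain ⟨w2, h2, q2, hq2⟩ := SimpleGraph.Walk.not_nil_iff.mp hqn
  have hrn : ¬ r.Nil := SimpleGraph.Walk.not_nil_of_ne hne2
  obtain ⟨w3, h3, r3, hr3⟩ := SimpleGraph.Walk.not_nil_iff.mp hrn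
  have hw : w2 = w3 := nQ_nbr_unique h2 h3
  have h2s : w2 ∈ q.support := by
    have : w2 ∈ q.reverse.support := by
      rw [hq2, SimpleGraph.Walk.support_cons]
      exact List.mem_cons_of_mem _ q2.start_mem_support
    rwa [SimpleGraph.Walk.support_reverse, List.mem_reverse] at this
  have h3s : w3 ∈ r.support.tail := by
    rw [hr3, SimpleGraph.Walk.support_cons]
    exact r3.start_mem_support
  have hnodup := hp.support_nodup
  rw [SimpleGraph.Walk.support_append] at hnodup
  exact (List.nodup_append'.mp hnodup).2.2 h2s (hw ▸ h3s)

lemma TS_acyclic : (TS n m C S).IsAcyclic := by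
  classical
  intro u c hc
  have hlen : c.support.tail.length = c.length := by
    have := SimpleGraph.Walk.length_support c
    have := List.length_tail (l := c.support)
    omega
  have h3 := hc.three_le_length
  have hnd : c.support.tail.Nodup := hc.support_nodup
  have hQ : ∃ i, nQ n m C i ∈ c.support.tail := by
    by_contra hno
    push_neg at hno
    have hsubset : c.support.tail.toFinset ⊆ {nA n m C, nB n m C} := by
      intro x hx
      rw [List.mem_toFinset] at hx
      rcases node_cases x with h | h | ⟨i, h⟩
      · simp [h]
      · simp [h]
      · exact absurd (h ▸ hx) (hno i)
    have hcard := Finset.card_le_card hsubset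
    rw [List.toFinset_card_of_nodup hnd] at hcard
    have h2 : ({nA n m C, nB n m C} : Finset _).card ≤ 2 := by
      refine le_trans (Finset.card_insert_le _ _) ?_
      simp
    omega
  obtain ⟨i, hi⟩ := hQ
  have hi' : nQ n m C i ∈ c.support := List.mem_of_mem_tail hi
  have hc' := hc.rotate hi'
  have hlen' : (c.rotate _ hi').length = c.length := by
    have hperm := (SimpleGraph.Walk.rotate_edges c _ hi').perm
    have := hperm.length_eq
    rwa [SimpleGraph.Walk.length_edges, SimpleGraph.Walk.length_edges] at this
  have hnn : ¬ (c.rotate _ hi').Nil := by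
    rw [SimpleGraph.Walk.nil_iff_length_eq]
    omega
  obtain ⟨w, h, q, hq⟩ := SimpleGraph.Walk.not_nil_iff.mp hnn
  rw [hq, SimpleGraph.Walk.cons_isCycle_iff] at hc'
  obtain ⟨hqp, -⟩ := hc'
  have hqrn : ¬ q.reverse.Nil := SimpleGraph.Walk.not_nil_of_ne h.ne
  obtain ⟨w2, h2, q2, hq2⟩ := SimpleGraph.Walk.not_nil_iff.mp hqrn
  have hw2 : w2 = w := nQ_nbr_unique h2 h
  subst hw2
  have hq2p : q2.IsPath := by
    have := hqp.reverse
    rw [hq2] at this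
    exact this.of_cons
  have hq2nil : q2 = SimpleGraph.Walk.nil := (SimpleGraph.Walk.isPath_iff_eq_nil (p := q2)).mp hq2p
  have hqlen : q.reverse.length = 1 := by rw [hq2, hq2nil]; simp
  rw [SimpleGraph.Walk.length_reverse] at hqlen
  have : (c.rotate _ hi').length = 2 := by rw [hq]; simp [hqlen]
  omega

lemma reach_nA (D : MaxCliques (GI n m C)) : (TS n m C S).Reachable D (nA n m C) := by
  rcases node_cases D with rfl | rfl | ⟨i, rfl⟩
  · exact SimpleGraph.Reachable.refl _
  · exact (adj_AB.symm).reachable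
  · by_cases h : i ∈ S
    · exact ((adj_AQ h).symm).reachable
    · exact ((adj_BQ h).symm).reachable.trans (adj_AB.symm).reachable

lemma TS_connected : (TS n m C S).Connected := by
  rw [SimpleGraph.connected_iff]
  exact ⟨fun u v => (reach_nA u).trans (reach_nA v).symm, ⟨nA n m C⟩⟩

lemma TS_isTree : (TS n m C S).IsTree := ⟨TS_connected, TS_acyclic⟩

lemma eq_nQ_of_mem_v {D : MaxCliques (GI n m C)} {i : Fin n} (hx : GV.v i ∈ D.1) :
    D = nQ n m C i := by
  rcases node_cases D with rfl | rfl | ⟨i', rfl⟩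
  · rw [show (nA n m C).1 = setA n m from rfl, mem_setA] at hx
    rcases hx with h | ⟨j, h⟩ <;> simp at h
  · rw [show (nB n m C).1 = setB n m from rfl, mem_setB] at hx
    rcases hx with h | ⟨j, h⟩ <;> simp at h
  · rw [show (nQ n m C i').1 = setQ n m C i' from rfl, mem_setQ] at hx
    rcases hx with h | ⟨j, h, _⟩
    · obtain rfl : i = i' := by
        exact congrArg (fun x => match x with | GV.v a => a | _ => i) h
      rfl
    · simp at h

lemma eq_nA_of_mem_z0 {D : MaxCliques (GI n m C)} (hx : GV.z 0 ∈ D.1) : D = nA n m C := by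
  rcases node_cases D with rfl | rfl | ⟨i', rfl⟩
  · rfl
  · rw [show (nB n m C).1 = setB n m from rfl, mem_setB] at hx
    rcases hx with h | ⟨j, h⟩ <;> simp [Fin.ext_iff] at h
  · rw [show (nQ n m C i').1 = setQ n m C i' from rfl, mem_setQ] at hx
    rcases hx with h | ⟨j, h, _⟩ <;> simp at h

lemma eq_nB_of_mem_z1 {D : MaxCliques (GI n m C)} (hx : GV.z 1 ∈ D.1) : D = nB n m C := by
  rcases node_cases D with rfl | rfl | ⟨i', rfl⟩
  · rw [show (nA n m C).1 = setA n m from rfl, mem_setA] at hx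
    rcases hx with h | ⟨j, h⟩ <;> simp [Fin.ext_iff] at h
  · rfl
  · rw [show (nQ n m C i').1 = setQ n m C i' from rfl, mem_setQ] at hx
    rcases hx with h | ⟨j, h, _⟩ <;> simp at h

lemma inter_sub_y {D D' : MaxCliques (GI n m C)} (hne : D ≠ D') {x : GV n m}
    (hx : x ∈ D.1) (hx' : x ∈ D'.1) : ∃ j, x = GV.y j := by
  cases x with
  | y j => exact ⟨j, rfl⟩
  | v i => exact absurd ((eq_nQ_of_mem_v hx).trans (eq_nQ_of_mem_v hx').symm) hne
  | z t =>
      have ht : t = 0 ∨ t = 1 := by omega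
      rcases ht with rfl | rfl
      · exact absurd ((eq_nA_of_mem_z0 hx).trans (eq_nA_of_mem_z0 hx').symm) hne
      · exact absurd ((eq_nB_of_mem_z1 hx).trans (eq_nB_of_mem_z1 hx').symm) hne

lemma TS_path_cond : ∀ (D D' : MaxCliques (GI n m C)) (p : (TS n m C S).Walk D D'), p.IsPath →
    ∀ D'' ∈ p.support, D.1 ∩ D'.1 ⊆ D''.1 := by
  intro D D' p hp D'' hD'' x hx
  obtain ⟨hxD, hxD'⟩ := hx
  by_cases hDD' : D = D'
  · subst hDD'
    rw [SimpleGraph.Walk.isPath_iff_eq_nil] at hp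
    subst hp
    simp only [SimpleGraph.Walk.support_nil, List.mem_singleton] at hD''
    subst hD''
    exact hxD
  by_cases h1 : D'' = D
  · subst h1; exact hxD
  by_cases h2 : D'' = D'
  · subst h2; exact hxD'
  obtain ⟨j, rfl⟩ := inter_sub_y hDD' hxD hxD'
  rcases node_cases D'' with rfl | rfl | ⟨i, rfl⟩
  · exact mem_setA.mpr (Or.inr ⟨j, rfl⟩)
  · exact mem_setB.mpr (Or.inr ⟨j, rfl⟩)
  · rcases nQ_not_internal p hp hD'' with h | h
    · exact absurd h h1
    · exact absurd h h2

end Aux2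


section Aux3
variable {n m : ℕ} {C : Fin m → Finset (Fin n)} {S : Set (Fin n)}

lemma cliqueSub_v (i : Fin n) : cliqueSub (GI n m C) (GV.v i) = {nQ n m C i} := by
  ext D
  simp only [cliqueSub, Set.mem_setOf_eq, Set.mem_singleton_iff]
  constructor
  · exact eq_nQ_of_mem_v
  · rintro rfl; exact mem_setQ.mpr (Or.inl rfl)

lemma cliqueSub_z0 : cliqueSub (GI n m C) (GV.z 0) = {nA n m C} := by
  ext D
  simp only [cliqueSub, Set.mem_setOf_eq, Set.mem_singleton_iff]
  constructor
  · exact eq_nA_of_mem_z0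
  · rintro rfl; exact mem_setA.mpr (Or.inl rfl)

lemma cliqueSub_z1 : cliqueSub (GI n m C) (GV.z 1) = {nB n m C} := by
  ext D
  simp only [cliqueSub, Set.mem_setOf_eq, Set.mem_singleton_iff]
  constructor
  · exact eq_nB_of_mem_z1
  · rintro rfl; exact mem_setB.mpr (Or.inl rfl)

lemma cliqueSub_y (j : Fin m) :
    cliqueSub (GI n m C) (GV.y j) =
      {nA n m C, nB n m C} ∪ (fun i => nQ n m C i) '' ↑(C j) := by
  ext D
  simp only [cliqueSub, Set.mem_setOf_eq, Set.mem_union, Set.mem_insert_iff,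
    Set.mem_singleton_iff, Set.mem_image, Finset.mem_coe]
  constructor
  · intro hD
    rcases node_cases D with rfl | rfl | ⟨i, rfl⟩
    · exact Or.inl (Or.inl rfl)
    · exact Or.inl (Or.inr rfl)
    · right
      rw [show (nQ n m C i).1 = setQ n m C i from rfl, mem_setQ] at hD
      rcases hD with h | ⟨j', h, hij⟩
      · simp at h
      · obtain rfl : j = j' := by
          exact congrArg (fun x => match x with | GV.y a => a | _ => j) h
        exact ⟨i, hij, rfl⟩
  · rintro ((rfl | rfl) | ⟨i, hi, rfl⟩)
    · exact mem_setA.mpr (Or.inr ⟨j, rfl⟩)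
    · exact mem_setB.mpr (Or.inr ⟨j, rfl⟩)
    · exact mem_setQ.mpr (Or.inr ⟨j, rfl, hi⟩)

lemma subLeaves_singleton {W : Type*} (T : SimpleGraph W) (X : W) :
    subLeaves T ({X} : Set W) = ∅ := by
  ext w
  simp only [subLeaves, Set.mem_setOf_eq, Set.mem_singleton_iff, Set.mem_empty_iff_false,
    iff_false, not_and]
  rintro rfl
  have : T.neighborSet w ∩ {w} = ∅ := by
    ext a
    simp only [Set.mem_inter_iff, SimpleGraph.mem_neighborSet, Set.mem_singleton_iff,
      Set.mem_empty_iff_false, iff_false, not_and]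
    intro ha h
    exact T.irrefl (h ▸ ha)
  rw [this]
  simp

lemma numSubLeaves_singleton {W : Type*} (T : SimpleGraph W) (X : W) :
    numSubLeaves T ({X} : Set W) = 0 := by
  rw [numSubLeaves, subLeaves_singleton]
  simp

lemma nbhd_nQ_mem {i : Fin n} (hi : i ∈ S) :
    (TS n m C S).neighborSet (nQ n m C i) = {nA n m C} := by
  ext D
  simp only [SimpleGraph.mem_neighborSet, Set.mem_singleton_iff]
  constructor
  · intro h
    rcases adj_nQ h with ⟨_, rfl⟩ | ⟨h', _⟩
    · rfl
    · exact absurd hi h'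
  · rintro rfl; exact (adj_AQ hi).symm

lemma nbhd_nQ_not_mem {i : Fin n} (hi : i ∉ S) :
    (TS n m C S).neighborSet (nQ n m C i) = {nB n m C} := by
  ext D
  simp only [SimpleGraph.mem_neighborSet, Set.mem_singleton_iff]
  constructor
  · intro h
    rcases adj_nQ h with ⟨h', _⟩ | ⟨_, rfl⟩
    · exact absurd h' hi
    · rfl
  · rintro rfl; exact (adj_BQ hi).symm

lemma subLeaves_y (j : Fin m) (h1 : ((↑(C j) : Set (Fin n)) ∩ S).Nonempty)
    (h2 : ((↑(C j) : Set (Fin n)) \ S).Nonempty) :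
    subLeaves (TS n m C S) (cliqueSub (GI n m C) (GV.y j)) =
      (fun i => nQ n m C i) '' ↑(C j) := by
  obtain ⟨i0, hi0C, hi0S⟩ := h1
  obtain ⟨i1, hi1C, hi1S⟩ := h2
  rw [Finset.mem_coe] at hi0C hi1C
  have hAs : nA n m C ∈ cliqueSub (GI n m C) (GV.y j) := mem_setA.mpr (Or.inr ⟨j, rfl⟩)
  have hBs : nB n m C ∈ cliqueSub (GI n m C) (GV.y j) := mem_setB.mpr (Or.inr ⟨j, rfl⟩)
  ext D
  simp only [subLeaves, Set.mem_setOf_eq]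
  constructor
  · rintro ⟨hDs, hcard⟩
    rw [cliqueSub_y] at hDs
    rcases hDs with (rfl | rfl) | hD
    · exfalso
      have hBmem : nB n m C ∈
          (TS n m C S).neighborSet (nA n m C) ∩ cliqueSub (GI n m C) (GV.y j) :=
        ⟨adj_AB, hBs⟩
      have hQmem : nQ n m C i0 ∈
          (TS n m C S).neighborSet (nA n m C) ∩ cliqueSub (GI n m C) (GV.y j) :=
        ⟨adj_AQ hi0S, mem_setQ.mpr (Or.inr ⟨j, rfl, hi0C⟩)⟩
      have hlt : 1 < ((TS n m C S).neighborSet (nA n m C) ∩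
          cliqueSub (GI n m C) (GV.y j)).ncard :=
        (Set.one_lt_ncard (Set.toFinite _)).mpr ⟨_, hBmem, _, hQmem, nB_ne_nQ i0⟩
      omega
    · exfalso
      have hAmem : nA n m C ∈
          (TS n m C S).neighborSet (nB n m C) ∩ cliqueSub (GI n m C) (GV.y j) :=
        ⟨adj_AB.symm, hAs⟩
      have hQmem : nQ n m C i1 ∈
          (TS n m C S).neighborSet (nB n m C) ∩ cliqueSub (GI n m C) (GV.y j) :=
        ⟨adj_BQ hi1S, mem_setQ.mpr (Or.inr ⟨j, rfl, hi1C⟩)⟩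
      have hlt : 1 < ((TS n m C S).neighborSet (nB n m C) ∩
          cliqueSub (GI n m C) (GV.y j)).ncard :=
        (Set.one_lt_ncard (Set.toFinite _)).mpr ⟨_, hAmem, _, hQmem, nA_ne_nQ i1⟩
      omega
    · exact hD
  · rintro ⟨i, hiC, rfl⟩
    rw [Finset.mem_coe] at hiC
    refine ⟨mem_setQ.mpr (Or.inr ⟨j, rfl, hiC⟩), ?_⟩
    by_cases hi : i ∈ S
    · rw [nbhd_nQ_mem hi, Set.inter_eq_self_of_subset_left (by simpa using hAs)]
      simp
    · rw [nbhd_nQ_not_mem hi, Set.inter_eq_self_of_subset_left (by simpa using hBs)]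
      simp

lemma numSubLeaves_y (j : Fin m) (h1 : ((↑(C j) : Set (Fin n)) ∩ S).Nonempty)
    (h2 : ((↑(C j) : Set (Fin n)) \ S).Nonempty) :
    numSubLeaves (TS n m C S) (cliqueSub (GI n m C) (GV.y j)) = (C j).card := by
  rw [numSubLeaves, subLeaves_y j h1 h2,
    Set.ncard_image_of_injective _ (fun a b h => nQ_inj h), Set.ncard_coe_finset]

lemma connected_induce_singleton {W : Type*} (T : SimpleGraph W) (X : W) :
    (T.induce ({X} : Set W)).Connected := by
  rw [SimpleGraph.connected_iff]
  refine ⟨?_, ⟨⟨X, rfl⟩⟩⟩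
  intro a b
  have : a = b := Subtype.ext ((Set.eq_of_mem_singleton a.2).trans
    (Set.eq_of_mem_singleton b.2).symm)
  rw [this]

lemma connected_induce_y (j : Fin m) :
    ((TS n m C S).induce (cliqueSub (GI n m C) (GV.y j))).Connected := by
  have hA : nA n m C ∈ cliqueSub (GI n m C) (GV.y j) := mem_setA.mpr (Or.inr ⟨j, rfl⟩)
  have hB : nB n m C ∈ cliqueSub (GI n m C) (GV.y j) := mem_setB.mpr (Or.inr ⟨j, rfl⟩)
  rw [SimpleGraph.connected_iff]
  refine ⟨?_, ⟨⟨_, hA⟩⟩⟩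
  have hBA : ((TS n m C S).induce (cliqueSub (GI n m C) (GV.y j))).Reachable ⟨_, hB⟩ ⟨_, hA⟩ :=
    SimpleGraph.Adj.reachable (by simp [adj_AB.symm])
  have key : ∀ x : ↥(cliqueSub (GI n m C) (GV.y j)),
      ((TS n m C S).induce (cliqueSub (GI n m C) (GV.y j))).Reachable x ⟨_, hA⟩ := by
    rintro ⟨D, hD⟩
    have hD' := hD
    rw [cliqueSub_y] at hD'
    rcases hD' with (rfl | rfl) | ⟨i, hiC, rfl⟩
    · rfl
    · exact hBA
    · by_cases hi : i ∈ S
      · exact SimpleGraph.Adj.reachable (by simp [(adj_AQ hi).symm])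
      · exact (SimpleGraph.Adj.reachable
          (v := (⟨_, hB⟩ : ↥(cliqueSub (GI n m C) (GV.y j))))
          (by simp [(adj_BQ hi).symm])).trans hBA
  exact fun u v => (key u).trans (key v).symm

lemma GI_adj_iff {u w : GV n m} (hne : u ≠ w) :
    (GI n m C).Adj u w ↔ (cliqueSub (GI n m C) u ∩ cliqueSub (GI n m C) w).Nonempty := by
  constructor
  · intro h
    rw [GI_adj] at h
    obtain ⟨-, h⟩ := h
    cases u with
    | v i =>
        cases w with
        | v i' => rcases h with h | h <;> exact h.elim
        | y j =>
            have hij : i ∈ C j := by rcases h with h | h; exacts [h, False.elim h]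
            exact ⟨nQ n m C i, mem_setQ.mpr (Or.inl rfl), mem_setQ.mpr (Or.inr ⟨j, rfl, hij⟩)⟩
        | z t => rcases h with h | h <;> exact h.elim
    | y j =>
        cases w with
        | v i =>
            have hij : i ∈ C j := by rcases h with h | h; exacts [False.elim h, h]
            exact ⟨nQ n m C i, mem_setQ.mpr (Or.inr ⟨j, rfl, hij⟩), mem_setQ.mpr (Or.inl rfl)⟩
        | y j' =>
            exact ⟨nA n m C, mem_setA.mpr (Or.inr ⟨j, rfl⟩), mem_setA.mpr (Or.inr ⟨j', rfl⟩)⟩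
        | z t =>
            have ht : t = 0 ∨ t = 1 := by omega
            rcases ht with rfl | rfl
            · exact ⟨nA n m C, mem_setA.mpr (Or.inr ⟨j, rfl⟩), mem_setA.mpr (Or.inl rfl)⟩
            · exact ⟨nB n m C, mem_setB.mpr (Or.inr ⟨j, rfl⟩), mem_setB.mpr (Or.inl rfl)⟩
    | z t =>
        cases w with
        | v i => rcases h with h | h <;> exact h.elim
        | y j =>
            have ht : t = 0 ∨ t = 1 := by omega
            rcases ht with rfl | rfl
            · exact ⟨nA n m C, mem_setA.mpr (Or.inl rfl), mem_setA.mpr (Or.inr ⟨j, rfl⟩)⟩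
            · exact ⟨nB n m C, mem_setB.mpr (Or.inl rfl), mem_setB.mpr (Or.inr ⟨j, rfl⟩)⟩
        | z t' => rcases h with h | h <;> exact h.elim
  · rintro ⟨D, hu, hw⟩
    exact D.2.1 hu hw hne

end Aux3


/-- If `S` is a solution of the instance, then the tree `T` with node set
`{A, B, Q_1, …, Q_n}` and edge set `{AB} ∪ {AQ_i : v_i ∈ S} ∪ {BQ_i : v_i ∉ S}` is a
clique tree of `G_I`; in the tree model defined by `T` the subtrees of the vertices
`v_i`, `z_1`, `z_2` have `0` leaves, and the subtree of each `y_j` has exactly `k`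
leaves. Consequently, the vertex leafage of `G_I` is at most `k`. -/
theorem stmt6 (k n m : ℕ) (hk : 3 ≤ k) (hn : k ≤ n) (hm : 1 ≤ m)
    (C : Fin m → Finset (Fin n)) (hC : ∀ j, (C j).card = k)
    (S : Set (Fin n))
    (hS : ∀ j, ((↑(C j) : Set (Fin n)) ∩ S).Nonempty ∧
               ((↑(C j) : Set (Fin n)) \ S).Nonempty) :
    (TS n m C S).IsTree ∧
    (∀ (D D' : MaxCliques (GI n m C)) (p : (TS n m C S).Walk D D'), p.IsPath →
      ∀ D'' ∈ p.support, D.1 ∩ D'.1 ⊆ D''.1) ∧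
    (∀ i : Fin n, numSubLeaves (TS n m C S) (cliqueSub (GI n m C) (GV.v i)) = 0) ∧
    (∀ t : Fin 2, numSubLeaves (TS n m C S) (cliqueSub (GI n m C) (GV.z t)) = 0) ∧
    (∀ j : Fin m, numSubLeaves (TS n m C S) (cliqueSub (GI n m C) (GV.y j)) = k) ∧
    vleafage (GI n m C) ≤ k := by
  have hz : ∀ t : Fin 2,
      numSubLeaves (TS n m C S) (cliqueSub (GI n m C) (GV.z t)) = 0 := by
    intro t
    have ht : t = 0 ∨ t = 1 := by omega
    rcases ht with rfl | rfl
    · rw [cliqueSub_z0]; exact numSubLeaves_singleton _ _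
    · rw [cliqueSub_z1]; exact numSubLeaves_singleton _ _
  have hv : ∀ i : Fin n,
      numSubLeaves (TS n m C S) (cliqueSub (GI n m C) (GV.v i)) = 0 := by
    intro i
    rw [cliqueSub_v]; exact numSubLeaves_singleton _ _
  have hy : ∀ j : Fin m,
      numSubLeaves (TS n m C S) (cliqueSub (GI n m C) (GV.y j)) = k := by
    intro j
    rw [numSubLeaves_y j (hS j).1 (hS j).2]
    exact hC j
  refine ⟨TS_isTree, TS_path_cond, hv, hz, hy, ?_⟩
  apply Nat.sInf_le
  refine ⟨⟨MaxCliques (GI n m C), inferInstance, TS n m C S, TS_isTree,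
    cliqueSub (GI n m C), ?_, ?_, fun u w hne => GI_adj_iff hne⟩, ?_⟩
  · intro u
    cases u with
    | v i => exact ⟨nQ n m C i, mem_setQ.mpr (Or.inl rfl)⟩
    | y j => exact ⟨nA n m C, mem_setA.mpr (Or.inr ⟨j, rfl⟩)⟩
    | z t =>
        have ht : t = 0 ∨ t = 1 := by omega
        rcases ht with rfl | rfl
        · exact ⟨nA n m C, mem_setA.mpr (Or.inl rfl)⟩
        · exact ⟨nB n m C, mem_setB.mpr (Or.inl rfl)⟩
  · intro u
    cases u with
    | v i => rw [cliqueSub_v]; exact connected_induce_singleton _ _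
    | y j => exact connected_induce_y j
    | z t =>
        have ht : t = 0 ∨ t = 1 := by omega
        rcases ht with rfl | rfl
        · rw [cliqueSub_z0]; exact connected_induce_singleton _ _
        · rw [cliqueSub_z1]; exact connected_induce_singleton _ _
  · intro u
    cases u with
    | v i => rw [hv i]; exact Nat.zero_le k
    | y j => rw [hy j]
    | z t => rw [hz t]; exact Nat.zero_le k
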